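/- Let P, Q, R ∈ L^(l)∖{0} and (ρ,σ) ∈ 𝔙 be such that [ℓ_{ρ,σ}(P), ℓ_{ρ,σ}(Q)] = ℓ_{ρ,σ}(R). Then: (1) st_{ρ,σ}(P) ≁ st_{ρ,σ}(Q) if and only if st_{ρ,σ}(P) + st_{ρ,σ}(Q) − (1,1) = st_{ρ,σ}(R); (2) en_{ρ,σ}(P) ≁ en_{ρ,σ}(Q) if and only if en_{ρ,σ}(P) + en_{ρ,σ}(Q) − (1,1) = en_{ρ,σ}(R). -/

import Mathlib

/-!
Formalization framework for "On the shape of possible counterexamples to the Jacobian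
Conjecture" by Guccione–Guccione–Valqui.

The algebra `L^(l) = K[x^{1/l}, x^{-1/l}, y]` is modelled as the monoid algebra of the
additive monoid `ℤ × ℕ` over `K`, where the exponent pair `(i, j)` encodes the monomial
`x^(i/l) * y^j`.
-/

open scoped Classical

set_option linter.unusedSectionVars false

noncomputable section

namespace JC

variable (K : Type*) [Field K] [CharZero K]

/-- `L^(l)`, modelled as the monoid algebra on `ℤ × ℕ`. -/
abbrev Ll := AddMonoidAlgebra K (ℤ × ℕ)

variable {K}

/-- The variable `x = (x^{1/l})^l` of `L = K[x,y] ⊆ L^(l)`. -/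
def xVar (l : ℕ) : Ll K := AddMonoidAlgebra.ofCoeff (Finsupp.single ((l : ℤ), (0 : ℕ)) (1 : K))

/-- The variable `y`. -/
def yVar : Ll K := AddMonoidAlgebra.ofCoeff (Finsupp.single ((0 : ℤ), (1 : ℕ)) (1 : K))

/-- The partial derivative `∂ₓ` on `L^(l)`:  `x^(i/l) y^j ↦ (i/l) x^(i/l - 1) y^j`. -/
def dX (l : ℕ) (P : Ll K) : Ll K :=
  AddMonoidAlgebra.ofCoeff <|
  Finsupp.sum P.coeff fun p c => Finsupp.single (p.1 - (l : ℤ), p.2) (c * ((p.1 : K) / (l : K)))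

/-- The partial derivative `∂ᵧ` on `L^(l)`. -/
def dY (P : Ll K) : Ll K :=
  AddMonoidAlgebra.ofCoeff <|
  Finsupp.sum P.coeff fun p c => Finsupp.single (p.1, p.2 - 1) (c * (p.2 : K))

/-- The Jacobian `[P,Q] = ∂ₓP ∂ᵧQ − ∂ᵧP ∂ₓQ`. -/
def br (l : ℕ) (P Q : Ll K) : Ll K := dX l P * dY Q - dY P * dX l Q

/-- `[P,Q] ∈ K^×`, i.e. the Jacobian is a nonzero constant. -/
def JacConst (l : ℕ) (P Q : Ll K) : Prop :=
  ∃ c : K, c ≠ 0 ∧ br l P Q = algebraMap K (Ll K) c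

/-- Membership in `L = K[x,y] ⊆ L^(l)`: all exponents `i/l` are nonnegative integers. -/
def InL (l : ℕ) (P : Ll K) : Prop := ∀ p ∈ P.coeff.support, 0 ≤ p.1 ∧ (l : ℤ) ∣ p.1

/-- The point `(i/l, j)` of `ℚ²` attached to an exponent pair `(i,j)`. -/
def pt (l : ℕ) (p : ℤ × ℕ) : ℚ × ℚ := ((p.1 : ℚ) / (l : ℚ), (p.2 : ℚ))

/-- The `(ρ,σ)`-degree `ρ·(i/l) + σ·j` of an exponent pair. -/
def dg (l : ℕ) (ρ σ : ℤ) (p : ℤ × ℕ) : ℚ :=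
  (ρ : ℚ) * ((p.1 : ℚ) / (l : ℚ)) + (σ : ℚ) * (p.2 : ℚ)

/-- `v_{ρ,σ}(P) ∈ WithBot ℚ`, with the convention `v_{ρ,σ}(0) = ⊥ = −∞`. -/
def v (l : ℕ) (ρ σ : ℤ) (P : Ll K) : WithBot ℚ :=
  P.coeff.support.sup fun p => ((dg l ρ σ p : ℚ) : WithBot ℚ)

/-- `ℚ`-valued `(ρ,σ)`-degree (with junk value `0` at `P = 0`). -/
def vq (l : ℕ) (ρ σ : ℤ) (P : Ll K) : ℚ := WithBot.unbotD 0 (v l ρ σ P)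

/-- The `(ρ,σ)`-leading form `ℓ_{ρ,σ}(P)`. -/
def lead (l : ℕ) (ρ σ : ℤ) (P : Ll K) : Ll K :=
  AddMonoidAlgebra.ofCoeff <|
  Finsupp.filter (fun p => ((dg l ρ σ p : ℚ) : WithBot ℚ) = v l ρ σ P) P.coeff

/-- `(ρ,σ)`-homogeneity. -/
def IsHomog (l : ℕ) (ρ σ : ℤ) (P : Ll K) : Prop := P = lead l ρ σ P

/-- Directions: coprime pairs of integers. -/
def IsDirV (d : ℤ × ℤ) : Prop := Int.gcd d.1 d.2 = 1

/-- `Dir(P)`: the set of directions in which the leading form is not a monomial. -/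
def DirSet (l : ℕ) (P : Ll K) : Set (ℤ × ℤ) :=
  {d | IsDirV d ∧ 1 < (lead l d.1 d.2 P).coeff.support.card}

/-- Cross product of two vectors of `ℚ²`. -/
def cross (A B : ℚ × ℚ) : ℚ := A.1 * B.2 - A.2 * B.1

/-- Dot product of two vectors of `ℚ²`. -/
def dot (A B : ℚ × ℚ) : ℚ := A.1 * B.1 + A.2 * B.2

/-- Alignment `A ∼ B`. -/
def Aligned (A B : ℚ × ℚ) : Prop := cross A B = 0

/-- A pair of integers viewed in `ℚ²`. -/
def dq (d : ℤ × ℤ) : ℚ × ℚ := ((d.1 : ℚ), (d.2 : ℚ))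

/-- Evaluation `v_{ρ,σ}` at a point of `ℚ²`. -/
def vpt (ρ σ : ℤ) (A : ℚ × ℚ) : ℚ := (ρ : ℚ) * A.1 + (σ : ℚ) * A.2

/-- `st_{ρ,σ}(P)`: the endpoint of the segment `Supp(ℓ_{ρ,σ}(P))` at which the
functional `(ρ,σ) × ·` is minimal (so that `(ρ,σ) × (en − st) ≥ 0`). -/
def stPt (l : ℕ) (ρ σ : ℤ) (P : Ll K) : ℚ × ℚ :=
  if h : (lead l ρ σ P).coeff.support.Nonempty then
    pt l <| Classical.choose <|
      (lead l ρ σ P).coeff.support.exists_min_image (fun p => cross (dq (ρ, σ)) (pt l p)) h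
  else (0, 0)

/-- `en_{ρ,σ}(P)`: the other endpoint of the segment `Supp(ℓ_{ρ,σ}(P))`. -/
def enPt (l : ℕ) (ρ σ : ℤ) (P : Ll K) : ℚ × ℚ :=
  if h : (lead l ρ σ P).coeff.support.Nonempty then
    pt l <| Classical.choose <|
      (lead l ρ σ P).coeff.support.exists_max_image (fun p => cross (dq (ρ, σ)) (pt l p)) h
  else (0, 0)

/-- The index (`0`–`3`) of a direction `a` in the counterclockwise sweep of the circle of
directions starting just after the base direction `u`. -/
def idx (u a : ℤ × ℤ) : ℕ :=
  if 0 < cross (dq u) (dq a) then 0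
  else if cross (dq u) (dq a) = 0 ∧ dot (dq u) (dq a) < 0 then 1
  else if cross (dq u) (dq a) < 0 then 2
  else 3

/-- The strict counterclockwise order on directions with base point `u`:  `a` is
encountered strictly before `b` when running counterclockwise starting just after `u`. -/
def ccwLt (u a b : ℤ × ℤ) : Prop :=
  idx u a < idx u b ∨ (idx u a = idx u b ∧ 0 < cross (dq a) (dq b))

/-- Reflexive closure of `ccwLt`. -/
def ccwLe (u a b : ℤ × ℤ) : Prop := a = b ∨ ccwLt u a b

/-- `w = Succ_P(u)`: the first element of `Dir(P)` encountered starting from `u` and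
running counterclockwise. -/
def IsSucc (l : ℕ) (P : Ll K) (u w : ℤ × ℤ) : Prop :=
  w ∈ DirSet l P ∧ w ≠ u ∧ ∀ w' ∈ DirSet l P, w' ≠ u → ccwLe u w w'

/-- `(m,n)`-pairs in `L^(l)`. -/
structure IsMNPair (l m n : ℕ) (P Q : Ll K) : Prop where
  coprime : Nat.Coprime m n
  one_lt_m : 1 < m
  one_lt_n : 1 < n
  jac : JacConst l P Q
  ratio11 : vq l 1 1 P / vq l 1 1 Q = (m : ℚ) / (n : ℚ)
  ratio10 : vq l 1 0 P / vq l 1 0 Q = (m : ℚ) / (n : ℚ)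
  en10 : vpt 1 (-1) (enPt l 1 0 P) < 0

/-- Standard `(m,n)`-pairs (in `L^(1)`). -/
def IsStandard (m n : ℕ) (P Q : Ll K) : Prop :=
  IsMNPair 1 m n P Q ∧ vpt 1 (-1) (stPt 1 1 0 P) < 0

/-- Membership in the interval of directions `I = ](1,−1),(1,0)]`. -/
def InI (d : ℤ × ℤ) : Prop := IsDirV d ∧ 0 < d.1 + d.2 ∧ d.2 ≤ 0

/-- Regular corners of an `(m,n)`-pair. -/
def IsRegCorner (l m : ℕ) (P : Ll K) (A : ℚ × ℚ) (d : ℤ × ℤ) : Prop :=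
  (∃ a : ℤ, ∃ b : ℕ, A = ((a : ℚ) / (l : ℚ), (b : ℚ)) ∧ 1 ≤ b ∧ (a : ℚ) / (l : ℚ) < (b : ℚ)) ∧
  InI d ∧ d ∈ DirSet l P ∧ enPt l d.1 d.2 P = ((m : ℚ) * A.1, (m : ℚ) * A.2)

/-- The set `A(P)`. -/
def ASet (l : ℕ) (P : Ll K) : Set (ℤ × ℤ) :=
  {d | d ∈ DirSet l P ∧ InI d ∧
    vpt 0 (-1) (stPt l d.1 d.2 P) < -1 ∧ vpt 1 (-1) (stPt l d.1 d.2 P) < 0}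

/-- The univariate polynomial `𝔭` with `ℓ_{ρ,σ}(P) = x^(k/l) 𝔭(z)`, `z := x^(−σ/ρ) y`
(for a `(ρ,σ)`-homogeneous element with `ρ > 0`, the `z`-degree equals the `y`-degree). -/
def toPoly (R : Ll K) : Polynomial K :=
  Finsupp.sum R.coeff fun p c => Polynomial.C c * Polynomial.X ^ p.2

/-- The minimal `y`-exponent occurring in `R`. -/
def ymin (R : Ll K) : ℕ := sInf (Prod.snd '' (R.coeff.support : Set (ℤ × ℕ)))

/-- The univariate polynomial `p` with `ℓ_{ρ,σ}(P) = x^(r/l) y^s p(z)` and `p(0) ≠ 0`. -/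
def toPolyL (R : Ll K) : Polynomial K :=
  Finsupp.sum R.coeff fun p c => Polynomial.C c * Polynomial.X ^ (p.2 - ymin R)

/-- A regular corner in direction `d` is of type II. -/
def TypeII (l : ℕ) (P Q : Ll K) (d : ℤ × ℤ) : Prop :=
  br l (lead l d.1 d.2 P) (lead l d.1 d.2 Q) = 0 ∧
    1 < (toPoly (lead l d.1 d.2 P)).roots.toFinset.card

variable (K)

/-- The polynomial subalgebra `K[x,y] ⊆ L^(1)`. -/
def polyAlg : Subalgebra K (Ll K) := Algebra.adjoin K {xVar 1, yVar}

/-- `(P,Q)` is a counterexample to the Jacobian Conjecture: `P, Q ∈ K[x,y]`, the Jacobian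
`[P,Q]` is a nonzero constant, and `K[P,Q] ≠ K[x,y]`. -/
def IsCtrex (P Q : Ll K) : Prop :=
  P ∈ polyAlg K ∧ Q ∈ polyAlg K ∧ JacConst 1 P Q ∧ Algebra.adjoin K {P, Q} ≠ polyAlg K

/-- The set of numbers `gcd(v_{1,1}(P), v_{1,1}(Q))` over all counterexamples `(P,Q)`. -/
def BSet : Set ℕ :=
  {d | ∃ P Q : Ll K, ∃ dP dQ : ℕ, IsCtrex K P Q ∧
    (dP : ℚ) = vq 1 1 1 P ∧ (dQ : ℚ) = vq 1 1 1 Q ∧ d = Nat.gcd dP dQ}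

/-- The number `B`: the minimum of `gcd(v_{1,1}(P), v_{1,1}(Q))` over all counterexamples. -/
def Bnum : ℕ := sInf (BSet K)

variable {K}


/-! ### Auxiliary lemmas for Statement 4 -/

section Statement4Aux

variable {K : Type*} [Field K] [CharZero K] in
/-- Combination of two single monomials coming from the two terms of the Jacobian. -/
lemma single_pair_sub (A : ℤ) (s t : ℕ) (u v : K) :
    (AddMonoidAlgebra.single ((A, s + (t - 1)) : ℤ × ℕ) (u * (t : K)) : Ll K)
      - AddMonoidAlgebra.single ((A, (s - 1) + t) : ℤ × ℕ) (v * (s : K))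
      = AddMonoidAlgebra.single ((A, s + t - 1) : ℤ × ℕ) (u * (t : K) - v * (s : K)) := by
  rcases Nat.eq_zero_or_pos s with hs | hs <;> rcases Nat.eq_zero_or_pos t with ht | ht
  · subst hs; subst ht; simp
  · subst hs
    rw [show 0 + (t - 1) = 0 + t - 1 from by omega]
    simp only [Nat.cast_zero, mul_zero, AddMonoidAlgebra.single_zero, sub_zero]
  · subst ht
    rw [show (s - 1) + 0 = s + 0 - 1 from by omega]
    simp only [Nat.cast_zero, mul_zero, AddMonoidAlgebra.single_zero, zero_sub, AddMonoidAlgebra.single_neg]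
  · rw [show s + (t - 1) = s + t - 1 from by omega,
      show (s - 1) + t = s + t - 1 from by omega, ← AddMonoidAlgebra.single_sub]

variable {K : Type*} [Field K] [CharZero K] in
/-- Expansion of the Jacobian as a double sum of single monomials. -/
lemma br_expand (l : ℕ) (P Q : Ll K) :
    br l P Q = ∑ p ∈ P.coeff.support, ∑ q ∈ Q.coeff.support,
      AddMonoidAlgebra.single ((p.1 + q.1 - l, p.2 + q.2 - 1) : ℤ × ℕ)
        (P.coeff p * Q.coeff q * ((((p.1 : ℤ) * q.2 - (p.2 : ℤ) * q.1 : ℤ) : K) / (l : K))) := by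
  simp only [br, dX, dY, Finsupp.sum, AddMonoidAlgebra.ofCoeff_sum, AddMonoidAlgebra.ofCoeff_single]
  rw [Finset.sum_mul, Finset.sum_mul, ← Finset.sum_sub_distrib]
  refine Finset.sum_congr rfl fun p hp => ?_
  rw [Finset.mul_sum, Finset.mul_sum, ← Finset.sum_sub_distrib]
  refine Finset.sum_congr rfl fun q hq => ?_
  rw [AddMonoidAlgebra.single_mul_single, AddMonoidAlgebra.single_mul_single,
    Prod.mk_add_mk, Prod.mk_add_mk,
    show (p.1 - (l:ℤ)) + q.1 = p.1 + q.1 - l from by ring,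
    show p.1 + (q.1 - (l:ℤ)) = p.1 + q.1 - l from by ring,
    show (P.coeff p * ((p.1 : K) / (l : K))) * (Q.coeff q * (q.2 : K))
        = (P.coeff p * ((p.1 : K) / (l : K)) * Q.coeff q) * (q.2 : K) from by ring,
    show (P.coeff p * (p.2 : K)) * (Q.coeff q * ((q.1 : K) / (l : K)))
        = (P.coeff p * Q.coeff q * ((q.1 : K) / (l : K))) * (p.2 : K) from by ring,
    single_pair_sub]
  congr 1
  push_cast
  ring

variable {K : Type*} [Field K] [CharZero K] in
lemma br_support_subset {l : ℕ} {P Q : Ll K} {m : ℤ × ℕ}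
    (hm : m ∈ (br l P Q).coeff.support) :
    ∃ p ∈ P.coeff.support, ∃ q ∈ Q.coeff.support,
      m = (p.1 + q.1 - l, p.2 + q.2 - 1) ∧
      ((p.1 : ℤ) * q.2 - (p.2 : ℤ) * q.1 : ℤ) ≠ 0 := by
  rw [Finsupp.mem_support_iff, br_expand] at hm
  rw [AddMonoidAlgebra.coeff_sum, Finset.sum_apply'] at hm
  obtain ⟨p, hp, hne⟩ := Finset.exists_ne_zero_of_sum_ne_zero hm
  rw [AddMonoidAlgebra.coeff_sum, Finset.sum_apply'] at hne
  obtain ⟨q, hq, hne⟩ := Finset.exists_ne_zero_of_sum_ne_zero hne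
  rw [AddMonoidAlgebra.coeff_single, Finsupp.single_apply] at hne
  split_ifs at hne with hc
  · refine ⟨p, hp, q, hq, hc.symm, fun h0 => hne ?_⟩
    rw [h0]
    simp
  · exact absurd rfl hne

variable {K : Type*} [Field K] [CharZero K] in
lemma br_coeff (l : ℕ) (P Q : Ll K) (p₀ q₀ : ℤ × ℕ)
    (hp₀ : p₀ ∈ P.coeff.support) (hq₀ : q₀ ∈ Q.coeff.support)
    (huniq : ∀ p ∈ P.coeff.support, ∀ q ∈ Q.coeff.support,
      ((p.1 + q.1 - l, p.2 + q.2 - 1) : ℤ × ℕ) = (p₀.1 + q₀.1 - l, p₀.2 + q₀.2 - 1) →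
      ((p.1 : ℤ) * q.2 - (p.2 : ℤ) * q.1 : ℤ) ≠ 0 → p = p₀ ∧ q = q₀) :
    (br l P Q).coeff (p₀.1 + q₀.1 - l, p₀.2 + q₀.2 - 1)
      = P.coeff p₀ * Q.coeff q₀ * ((((p₀.1 : ℤ) * q₀.2 - (p₀.2 : ℤ) * q₀.1 : ℤ) : K) / (l : K)) := by
  rw [br_expand, AddMonoidAlgebra.coeff_sum, Finset.sum_apply']
  rw [Finset.sum_eq_single_of_mem p₀ hp₀ ?_]
  · rw [AddMonoidAlgebra.coeff_sum, Finset.sum_apply', Finset.sum_eq_single_of_mem q₀ hq₀ ?_]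
    · rw [AddMonoidAlgebra.coeff_single, Finsupp.single_apply, if_pos rfl]
    · intro q hq hqne
      rw [AddMonoidAlgebra.coeff_single, Finsupp.single_apply]
      split_ifs with hc
      · rcases eq_or_ne ((p₀.1 : ℤ) * q.2 - (p₀.2 : ℤ) * q.1 : ℤ) 0 with hD | hD
        · rw [hD]; simp
        · exact absurd (huniq p₀ hp₀ q hq hc hD).2 hqne
      · rfl
  · intro p hp hpne
    rw [AddMonoidAlgebra.coeff_sum, Finset.sum_apply']
    apply Finset.sum_eq_zero
    intro q hq
    rw [AddMonoidAlgebra.coeff_single, Finsupp.single_apply]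
    split_ifs with hc
    · rcases eq_or_ne ((p.1 : ℤ) * q.2 - (p.2 : ℤ) * q.1 : ℤ) 0 with hD | hD
      · rw [hD]; simp
      · exact absurd (huniq p hp q hq hc hD).1 hpne
    · rfl

variable {K : Type*} [Field K] [CharZero K] in
lemma lead_support_nonempty (l : ℕ) (ρ σ : ℤ) {P : Ll K} (hP : P ≠ 0) :
    (lead l ρ σ P).coeff.support.Nonempty := by
  have hs : P.coeff.support.Nonempty := Finsupp.support_nonempty_iff.2 (mt AddMonoidAlgebra.coeff_eq_zero.1 hP)
  obtain ⟨p, hp, hmax⟩ := Finset.exists_mem_eq_sup P.coeff.support hs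
      (fun p => ((dg l ρ σ p : ℚ) : WithBot ℚ))
  refine ⟨p, ?_⟩
  rw [lead, AddMonoidAlgebra.coeff_ofCoeff, Finsupp.support_filter, Finset.mem_filter]
  exact ⟨hp, hmax.symm⟩

variable {K : Type*} [Field K] [CharZero K] in
lemma dg_eq_of_mem_lead {l : ℕ} {ρ σ : ℤ} {P : Ll K} {p q : ℤ × ℕ}
    (hp : p ∈ (lead l ρ σ P).coeff.support) (hq : q ∈ (lead l ρ σ P).coeff.support) :
    dg l ρ σ p = dg l ρ σ q := by
  rw [lead, AddMonoidAlgebra.coeff_ofCoeff, Finsupp.support_filter, Finset.mem_filter] at hp hq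
  have h := hp.2.trans hq.2.symm
  exact_mod_cast h

lemma pt_inj {l : ℕ} (hl : 0 < l) {p q : ℤ × ℕ} (h : pt l p = pt l q) : p = q := by
  have hl0 : (l : ℚ) ≠ 0 := Nat.cast_ne_zero.2 hl.ne'
  rw [Prod.ext_iff] at h
  obtain ⟨h1, h2⟩ := h
  simp only [pt] at h1 h2
  rw [div_eq_div_iff hl0 hl0] at h1
  have h1' := mul_right_cancel₀ hl0 h1
  exact Prod.ext (by exact_mod_cast h1') (by exact_mod_cast h2)

lemma dg_pt (l : ℕ) (ρ σ : ℤ) (p : ℤ × ℕ) : dg l ρ σ p = vpt ρ σ (pt l p) := rfl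

lemma cross_add_right (A B C : ℚ × ℚ) : cross A (B + C) = cross A B + cross A C := by
  simp only [cross, Prod.fst_add, Prod.snd_add]; ring

lemma cross_sub_right (A B C : ℚ × ℚ) : cross A (B - C) = cross A B - cross A C := by
  simp only [cross, Prod.fst_sub, Prod.snd_sub]; ring

lemma cross_pt {l : ℕ} (hl : 0 < l) (p q : ℤ × ℕ) :
    cross (pt l p) (pt l q) = ((((p.1 : ℤ) * q.2 - (p.2 : ℤ) * q.1 : ℤ) : ℚ)) / l := by
  simp only [cross, pt]
  push_cast
  ring

lemma vpt_cross_inj {ρ σ : ℤ} (hρσ : ¬(ρ = 0 ∧ σ = 0)) {A B : ℚ × ℚ}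
    (h1 : vpt ρ σ A = vpt ρ σ B) (h2 : cross (dq (ρ, σ)) A = cross (dq (ρ, σ)) B) :
    A = B := by
  simp only [vpt, cross, dq] at h1 h2
  have hne : (ρ : ℚ) ^ 2 + (σ : ℚ) ^ 2 ≠ 0 := by
    intro h0
    have hρ : (ρ : ℚ) = 0 := by nlinarith [sq_nonneg (ρ : ℚ), sq_nonneg (σ : ℚ)]
    have hσ : (σ : ℚ) = 0 := by nlinarith [sq_nonneg (ρ : ℚ), sq_nonneg (σ : ℚ)]
    exact hρσ ⟨by exact_mod_cast hρ, by exact_mod_cast hσ⟩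
  have e1 : A.1 = B.1 := by
    apply mul_left_cancel₀ hne
    linear_combination (ρ : ℚ) * h1 - (σ : ℚ) * h2
  have e2 : A.2 = B.2 := by
    apply mul_left_cancel₀ hne
    linear_combination (σ : ℚ) * h1 + (ρ : ℚ) * h2
  exact Prod.ext e1 e2

variable {K : Type*} [Field K] [CharZero K] in
lemma stPt_spec (l : ℕ) (ρ σ : ℤ) (P : Ll K) (h : (lead l ρ σ P).coeff.support.Nonempty) :
    ∃ p₀ ∈ (lead l ρ σ P).coeff.support, stPt l ρ σ P = pt l p₀ ∧
      ∀ p ∈ (lead l ρ σ P).coeff.support,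
        cross (dq (ρ, σ)) (pt l p₀) ≤ cross (dq (ρ, σ)) (pt l p) := by
  have spec := Classical.choose_spec ((lead l ρ σ P).coeff.support.exists_min_image
    (fun p => cross (dq (ρ, σ)) (pt l p)) h)
  exact ⟨_, spec.1, by unfold stPt; rw [dif_pos h], spec.2⟩

variable {K : Type*} [Field K] [CharZero K] in
lemma enPt_spec (l : ℕ) (ρ σ : ℤ) (P : Ll K) (h : (lead l ρ σ P).coeff.support.Nonempty) :
    ∃ p₀ ∈ (lead l ρ σ P).coeff.support, enPt l ρ σ P = pt l p₀ ∧
      ∀ p ∈ (lead l ρ σ P).coeff.support,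
        cross (dq (ρ, σ)) (pt l p) ≤ cross (dq (ρ, σ)) (pt l p₀) := by
  have spec := Classical.choose_spec ((lead l ρ σ P).coeff.support.exists_max_image
    (fun p => cross (dq (ρ, σ)) (pt l p)) h)
  exact ⟨_, spec.1, by unfold enPt; rw [dif_pos h], spec.2⟩

variable {K : Type*} [Field K] [CharZero K] in
/-- The core of Statement 4, uniform in the choice of endpoint (`ε = 1` for `st`,
`ε = -1` for `en`). -/
lemma statement4_core (l : ℕ) (hl : 0 < l) (ρ σ : ℤ) (hdir : IsDirV (ρ, σ))
    (P Q R : Ll K)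
    (h : br l (lead l ρ σ P) (lead l ρ σ Q) = lead l ρ σ R)
    (ε : ℚ) (hε : ε = 1 ∨ ε = -1) (p₀ q₀ m₀ : ℤ × ℕ)
    (hp₀ : p₀ ∈ (lead l ρ σ P).coeff.support)
    (hq₀ : q₀ ∈ (lead l ρ σ Q).coeff.support)
    (hm₀ : m₀ ∈ (lead l ρ σ R).coeff.support)
    (hminP : ∀ p ∈ (lead l ρ σ P).coeff.support,
      ε * cross (dq (ρ, σ)) (pt l p₀) ≤ ε * cross (dq (ρ, σ)) (pt l p))
    (hminQ : ∀ q ∈ (lead l ρ σ Q).coeff.support,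
      ε * cross (dq (ρ, σ)) (pt l q₀) ≤ ε * cross (dq (ρ, σ)) (pt l q))
    (hminR : ∀ m ∈ (lead l ρ σ R).coeff.support,
      ε * cross (dq (ρ, σ)) (pt l m₀) ≤ ε * cross (dq (ρ, σ)) (pt l m)) :
    (¬ Aligned (pt l p₀) (pt l q₀) ↔ pt l p₀ + pt l q₀ - (1, 1) = pt l m₀) := by
  have hl0 : (l : ℚ) ≠ 0 := Nat.cast_ne_zero.2 hl.ne'
  have hlK : (l : K) ≠ 0 := Nat.cast_ne_zero.2 hl.ne'
  have hρσ : ¬(ρ = 0 ∧ σ = 0) := by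
    rintro ⟨rfl, rfl⟩
    simp [IsDirV] at hdir
  have hsupp : (lead l ρ σ R).coeff.support
      = (br l (lead l ρ σ P) (lead l ρ σ Q)).coeff.support := by rw [h]
  -- uniqueness of extremal pairs
  have force : ∀ p ∈ (lead l ρ σ P).coeff.support, ∀ q ∈ (lead l ρ σ Q).coeff.support,
      cross (dq (ρ, σ)) (pt l p) + cross (dq (ρ, σ)) (pt l q)
        = cross (dq (ρ, σ)) (pt l p₀) + cross (dq (ρ, σ)) (pt l q₀) →
      p = p₀ ∧ q = q₀ := by
    intro p hp q hq hsum
    have h1 := hminP p hp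
    have h2 := hminQ q hq
    have e1 : cross (dq (ρ, σ)) (pt l p) = cross (dq (ρ, σ)) (pt l p₀) := by
      rcases hε with rfl | rfl <;> linarith
    have e2 : cross (dq (ρ, σ)) (pt l q) = cross (dq (ρ, σ)) (pt l q₀) := by
      rcases hε with rfl | rfl <;> linarith
    have pp : pt l p = pt l p₀ := by
      refine vpt_cross_inj hρσ ?_ e1
      rw [← dg_pt, ← dg_pt]
      exact dg_eq_of_mem_lead hp hp₀
    have qq : pt l q = pt l q₀ := by
      refine vpt_cross_inj hρσ ?_ e2
      rw [← dg_pt, ← dg_pt]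
      exact dg_eq_of_mem_lead hq hq₀
    exact ⟨pt_inj hl pp, pt_inj hl qq⟩
  -- key estimate on the support of the bracket
  have key : ∀ m ∈ (lead l ρ σ R).coeff.support,
      ε * (cross (dq (ρ, σ)) (pt l p₀) + cross (dq (ρ, σ)) (pt l q₀)
          - cross (dq (ρ, σ)) (1, 1))
        ≤ ε * cross (dq (ρ, σ)) (pt l m) ∧
      (ε * cross (dq (ρ, σ)) (pt l m)
          ≤ ε * (cross (dq (ρ, σ)) (pt l p₀) + cross (dq (ρ, σ)) (pt l q₀)
            - cross (dq (ρ, σ)) (1, 1)) →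
        pt l m = pt l p₀ + pt l q₀ - (1, 1) ∧ cross (pt l p₀) (pt l q₀) ≠ 0) := by
    intro m hm
    rw [hsupp] at hm
    obtain ⟨p, hp, q, hq, hmeq, hD⟩ := br_support_subset hm
    have hge1 : 1 ≤ p.2 + q.2 := by
      by_contra hcon
      have hp2 : p.2 = 0 := by omega
      have hq2 : q.2 = 0 := by omega
      rw [hp2, hq2] at hD
      simp at hD
    have hptm : pt l m = pt l p + pt l q - (1, 1) := by
      rw [hmeq]
      refine Prod.ext ?_ ?_
      · simp only [pt, Prod.fst_add, Prod.fst_sub]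
        push_cast
        field_simp
      · simp only [pt, Prod.snd_add, Prod.snd_sub]
        push_cast [hge1]
        ring
    have hcm : cross (dq (ρ, σ)) (pt l m)
        = cross (dq (ρ, σ)) (pt l p) + cross (dq (ρ, σ)) (pt l q)
          - cross (dq (ρ, σ)) (1, 1) := by
      rw [hptm, cross_sub_right, cross_add_right]
    have h1 := hminP p hp
    have h2 := hminQ q hq
    constructor
    · rw [hcm]
      rcases hε with rfl | rfl <;> linarith
    · intro hle
      have hsum : cross (dq (ρ, σ)) (pt l p) + cross (dq (ρ, σ)) (pt l q)
          = cross (dq (ρ, σ)) (pt l p₀) + cross (dq (ρ, σ)) (pt l q₀) := by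
        rw [hcm] at hle
        rcases hε with rfl | rfl <;> linarith
      obtain ⟨rfl, rfl⟩ := force p hp q hq hsum
      refine ⟨hptm, ?_⟩
      rw [cross_pt hl]
      exact div_ne_zero (Int.cast_ne_zero.2 hD) hl0
  constructor
  · -- not aligned → equality
    intro hal
    have hD₀ : ((p₀.1 : ℤ) * q₀.2 - (p₀.2 : ℤ) * q₀.1 : ℤ) ≠ 0 := by
      intro h0
      apply hal
      unfold Aligned
      rw [cross_pt hl, h0]
      simp
    have hge1 : 1 ≤ p₀.2 + q₀.2 := by
      by_contra hcon
      have hp2 : p₀.2 = 0 := by omega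
      have hq2 : q₀.2 = 0 := by omega
      rw [hp2, hq2] at hD₀
      simp at hD₀
    have huniq : ∀ p ∈ (lead l ρ σ P).coeff.support, ∀ q ∈ (lead l ρ σ Q).coeff.support,
        ((p.1 + q.1 - l, p.2 + q.2 - 1) : ℤ × ℕ) = (p₀.1 + q₀.1 - l, p₀.2 + q₀.2 - 1) →
        ((p.1 : ℤ) * q.2 - (p.2 : ℤ) * q.1 : ℤ) ≠ 0 → p = p₀ ∧ q = q₀ := by
      intro p hp q hq hcomb hD
      have hge : 1 ≤ p.2 + q.2 := by
        by_contra hcon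
        have hp2 : p.2 = 0 := by omega
        have hq2 : q.2 = 0 := by omega
        rw [hp2, hq2] at hD
        simp at hD
      rw [Prod.mk.injEq] at hcomb
      obtain ⟨hc1, hc2⟩ := hcomb
      have hsum : pt l p + pt l q = pt l p₀ + pt l q₀ := by
        refine Prod.ext ?_ ?_
        · simp only [pt, Prod.fst_add]
          have he : (p.1 : ℚ) + q.1 = (p₀.1 : ℚ) + q₀.1 := by
            exact_mod_cast congrArg (fun z : ℤ => (z : ℚ)) (by omega :
              p.1 + q.1 = p₀.1 + q₀.1)
          rw [← add_div, ← add_div, he]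
        · simp only [pt, Prod.snd_add]
          exact_mod_cast congrArg (fun n : ℕ => (n : ℚ)) (by omega :
            p.2 + q.2 = p₀.2 + q₀.2)
      apply force p hp q hq
      have hce := congrArg (cross (dq (ρ, σ))) hsum
      rwa [cross_add_right, cross_add_right] at hce
    have hcoef := br_coeff l (lead l ρ σ P) (lead l ρ σ Q) p₀ q₀ hp₀ hq₀ huniq
    have hmem : ((p₀.1 + q₀.1 - l, p₀.2 + q₀.2 - 1) : ℤ × ℕ)
        ∈ (lead l ρ σ R).coeff.support := by
      rw [hsupp, Finsupp.mem_support_iff, hcoef]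
      exact mul_ne_zero (mul_ne_zero (Finsupp.mem_support_iff.1 hp₀)
        (Finsupp.mem_support_iff.1 hq₀))
        (div_ne_zero (Int.cast_ne_zero.2 hD₀) hlK)
    have hptm₁ : pt l ((p₀.1 + q₀.1 - l, p₀.2 + q₀.2 - 1) : ℤ × ℕ)
        = pt l p₀ + pt l q₀ - (1, 1) := by
      refine Prod.ext ?_ ?_
      · simp only [pt, Prod.fst_add, Prod.fst_sub]
        push_cast
        field_simp
      · simp only [pt, Prod.snd_add, Prod.snd_sub]
        push_cast [hge1]
        ring
    have hub := hminR _ hmem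
    have hcm₁ : cross (dq (ρ, σ)) (pt l ((p₀.1 + q₀.1 - l, p₀.2 + q₀.2 - 1) : ℤ × ℕ))
        = cross (dq (ρ, σ)) (pt l p₀) + cross (dq (ρ, σ)) (pt l q₀)
          - cross (dq (ρ, σ)) (1, 1) := by
      rw [hptm₁, cross_sub_right, cross_add_right]
    have hkey := (key m₀ hm₀).2 (by rw [hcm₁] at hub; exact hub)
    exact hkey.1.symm
  · -- equality → not aligned
    intro heq hal
    refine ((key m₀ hm₀).2 ?_).2 hal
    rw [← heq, cross_sub_right, cross_add_right]

end Statement4Aux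


/-- Proposition 2.4.  If `[ℓ_{ρ,σ}(P), ℓ_{ρ,σ}(Q)] = ℓ_{ρ,σ}(R)` then:
(1) `st_{ρ,σ}(P) ≁ st_{ρ,σ}(Q)` iff `st_{ρ,σ}(P) + st_{ρ,σ}(Q) − (1,1) = st_{ρ,σ}(R)`;
(2) `en_{ρ,σ}(P) ≁ en_{ρ,σ}(Q)` iff `en_{ρ,σ}(P) + en_{ρ,σ}(Q) − (1,1) = en_{ρ,σ}(R)`. -/
theorem statement4 (l : ℕ) (hl : 0 < l) (ρ σ : ℤ) (hdir : IsDirV (ρ, σ))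
    (P Q R : Ll K) (hP : P ≠ 0) (hQ : Q ≠ 0) (hR : R ≠ 0)
    (h : br l (lead l ρ σ P) (lead l ρ σ Q) = lead l ρ σ R) :
    (¬ Aligned (stPt l ρ σ P) (stPt l ρ σ Q) ↔
      stPt l ρ σ P + stPt l ρ σ Q - (1, 1) = stPt l ρ σ R) ∧
    (¬ Aligned (enPt l ρ σ P) (enPt l ρ σ Q) ↔
      enPt l ρ σ P + enPt l ρ σ Q - (1, 1) = enPt l ρ σ R) := by
  have hPl := lead_support_nonempty l ρ σ hP
  have hQl := lead_support_nonempty l ρ σ hQ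
  have hRl := lead_support_nonempty l ρ σ hR
  obtain ⟨p₀, hp₀, hpst, hpmin⟩ := stPt_spec l ρ σ P hPl
  obtain ⟨q₀, hq₀, hqst, hqmin⟩ := stPt_spec l ρ σ Q hQl
  obtain ⟨m₀, hm₀, hmst, hmmin⟩ := stPt_spec l ρ σ R hRl
  obtain ⟨p₁, hp₁, hpen, hpmax⟩ := enPt_spec l ρ σ P hPl
  obtain ⟨q₁, hq₁, hqen, hqmax⟩ := enPt_spec l ρ σ Q hQl
  obtain ⟨m₁, hm₁, hmen, hmmax⟩ := enPt_spec l ρ σ R hRl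
  constructor
  · rw [hpst, hqst, hmst]
    exact statement4_core l hl ρ σ hdir P Q R h 1 (Or.inl rfl) p₀ q₀ m₀ hp₀ hq₀ hm₀
      (fun p hp => by simpa using hpmin p hp)
      (fun q hq => by simpa using hqmin q hq)
      (fun m hm => by simpa using hmmin m hm)
  · rw [hpen, hqen, hmen]
    exact statement4_core l hl ρ σ hdir P Q R h (-1) (Or.inr rfl) p₁ q₁ m₁ hp₁ hq₁ hm₁
      (fun p hp => by have := hpmax p hp; linarith)
      (fun q hq => by have := hqmax q hq; linarith)
      (fun m hm => by have := hmmax m hm; linarith)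

end JC
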